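/- Let K be an L-space knot with symmetric Alexander polynomial Δ_K(T) = ∑_{j=−g}^{g} a_j T^j of degree g, and define torsion coefficients t_i(K) = ∑_{j≥1} j·a_{|i|+j}. If the coefficients a_j alternate in sign, are ±1, and a_g = 1 (the L-space knot condition on the Alexander polynomial), then t_i(K) ≥ 0 for all i, the sequence (t_i)_{i≥0} is non-increasing, and t_i(K) = 0 if and only if i ≥ g. -/

import Mathlib

/-- for a symmetric Laurent polynomial of degree `g` with top
coefficient 1 whose nonzero coefficients are ±1 and alternate in sign (the form
of the Alexander polynomial of an L-space knot), the torsion coefficients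
`t_i = ∑_{j ≥ 1} j · a_{|i|+j}` are non-negative, non-increasing in `i ≥ 0`,
and vanish exactly for `i ≥ g`. -/
theorem torsion_coefficients_of_lspace_polynomial (g : ℤ) (hg : 0 < g)
    (a : ℤ → ℤ)
    (hsupp : ∀ j : ℤ, g < |j| → a j = 0)
    (hsym : ∀ j : ℤ, a (-j) = a j)
    (htop : a g = 1)
    (hpm : ∀ j : ℤ, a j = -1 ∨ a j = 0 ∨ a j = 1)
    (halt : ∀ j k : ℤ, j < k → a j ≠ 0 → a k ≠ 0 →
      (∀ m : ℤ, j < m → m < k → a m = 0) → a j * a k = -1)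
    (t : ℤ → ℤ)
    (ht : ∀ i : ℤ, t i = ∑ j ∈ Finset.Icc (1 : ℤ) g, j * a (|i| + j)) :
    (∀ i : ℤ, 0 ≤ t i) ∧
    (∀ i : ℤ, 0 ≤ i → t (i + 1) ≤ t i) ∧
    (∀ i : ℤ, 0 ≤ i → (t i = 0 ↔ g ≤ i)) := by
  set S : ℤ → ℤ := fun i => ∑ k ∈ Finset.Icc (i + 1) g, a k with hSdef
  have hsupp' : ∀ j : ℤ, g < j → a j = 0 := by
    intro j hj
    exact hsupp j (by rw [abs_of_pos (by omega)]; exact hj)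
  have hSzero : ∀ i : ℤ, g ≤ i → S i = 0 := by
    intro i hi
    simp only [hSdef]
    rw [Finset.Icc_eq_empty (by omega), Finset.sum_empty]
  -- existence of the least nonzero coefficient above i
  have hminaux : ∀ n : ℕ, ∀ i : ℤ, i < g → (g - i).toNat ≤ n →
      ∃ m, i < m ∧ m ≤ g ∧ a m ≠ 0 ∧ ∀ k, i < k → k < m → a k = 0 := by
    intro n
    induction n with
    | zero => intro i hi hn; exfalso; omega
    | succ n ih =>
      intro i hi hn
      by_cases h1 : a (i + 1) = 0
      · by_cases h2 : i + 1 < g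
        · obtain ⟨m, hm1, hm2, hm3, hm4⟩ := ih (i + 1) h2 (by omega)
          refine ⟨m, by omega, hm2, hm3, ?_⟩
          intro k hk1 hk2
          by_cases hk : k = i + 1
          · rw [hk]; exact h1
          · exact hm4 k (by omega) hk2
        · exfalso
          have : i + 1 = g := by omega
          rw [this, htop] at h1
          norm_num at h1
      · exact ⟨i + 1, by omega, by omega, h1, fun k hk1 hk2 => by omega⟩
  have hmin : ∀ i : ℤ, i < g →
      ∃ m, i < m ∧ m ≤ g ∧ a m ≠ 0 ∧ ∀ k, i < k → k < m → a k = 0 :=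
    fun i hi => hminaux (g - i).toNat i hi le_rfl
  -- key: 2 * S i = 1 + a m where m is the least nonzero coefficient above i
  have key : ∀ n : ℕ, ∀ i m : ℤ, (g - i).toNat ≤ n → i < m → m ≤ g → a m ≠ 0 →
      (∀ k, i < k → k < m → a k = 0) → 2 * S i = 1 + a m := by
    intro n
    induction n with
    | zero => intro i m hn him hmg ham hk; exfalso; omega
    | succ n ih =>
      intro i m hn him hmg ham hk
      have h1 : S i = ∑ k ∈ Finset.Icc m g, a k := by
        simp only [hSdef]
        symm
        apply Finset.sum_subset (Finset.Icc_subset_Icc (by omega) le_rfl)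
        intro x hx hx'
        simp only [Finset.mem_Icc] at hx hx'
        exact hk x (by omega) (by omega)
      have h2 : Finset.Icc m g = insert m (Finset.Icc (m + 1) g) := by
        ext x
        simp only [Finset.mem_Icc, Finset.mem_insert]
        omega
      have h3 : S i = a m + S m := by
        rw [h1, h2, Finset.sum_insert (by simp only [Finset.mem_Icc]; omega)]
      by_cases hm : m = g
      · subst hm
        rw [h3, hSzero m le_rfl, htop]
        norm_num
      · obtain ⟨m', hm1, hm2, hm3, hm4⟩ := hmin m (by omega)
        have hIH : 2 * S m = 1 + a m' := ih m m' (by omega) hm1 hm2 hm3 hm4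
        have hprod : a m * a m' = -1 := halt m m' hm1 ham hm3 hm4
        rw [h3]
        rcases hpm m with h | h | h
        · rw [h] at hprod ⊢
          have : a m' = 1 := by linarith
          omega
        · exact absurd h ham
        · rw [h] at hprod ⊢
          have : a m' = -1 := by linarith
          omega
  have hS01 : ∀ i : ℤ, 0 ≤ S i ∧ S i ≤ 1 := by
    intro i
    by_cases h : g ≤ i
    · rw [hSzero i h]; omega
    · obtain ⟨m, hm1, hm2, hm3, hm4⟩ := hmin i (by omega)
      have hkey := key (g - i).toNat i m le_rfl hm1 hm2 hm3 hm4
      rcases hpm m with h' | h' | h' <;> omega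
  -- reindexing
  have hre : ∀ i : ℤ, 0 ≤ i → t i = ∑ k ∈ Finset.Icc (i + 1) (i + g), (k - i) * a k := by
    intro i hi
    rw [ht i, abs_of_nonneg hi,
      show Finset.Icc (i + 1) (i + g) = (Finset.Icc (1 : ℤ) g).map (addLeftEmbedding i) from
        (Finset.map_add_left_Icc 1 g i).symm,
      Finset.sum_map]
    apply Finset.sum_congr rfl
    intro j hj
    simp only [addLeftEmbedding_apply]
    ring
  have hstep : ∀ i : ℤ, 0 ≤ i → t i = S i + t (i + 1) := by
    intro i hi
    have hA : t i = ∑ k ∈ Finset.Icc (i + 1) (i + g + 1), (k - i) * a k := by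
      rw [hre i hi]
      apply Finset.sum_subset (Finset.Icc_subset_Icc le_rfl (by omega))
      intro x hx hx'
      simp only [Finset.mem_Icc] at hx hx'
      rw [hsupp' x (by omega), mul_zero]
    have hB : t (i + 1) = ∑ k ∈ Finset.Icc (i + 1) (i + g + 1), (k - (i + 1)) * a k := by
      rw [hre (i + 1) (by omega)]
      apply Finset.sum_subset (by apply Finset.Icc_subset_Icc <;> omega)
      intro x hx hx'
      simp only [Finset.mem_Icc] at hx hx'
      have hx2 : x = i + 1 := by omega
      rw [hx2]
      ring
    have hC : ∑ k ∈ Finset.Icc (i + 1) (i + g + 1), a k = S i := by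
      simp only [hSdef]
      symm
      apply Finset.sum_subset (Finset.Icc_subset_Icc le_rfl (by omega))
      intro x hx hx'
      simp only [Finset.mem_Icc] at hx hx'
      exact hsupp' x (by omega)
    rw [hA, hB, ← hC, ← Finset.sum_add_distrib]
    apply Finset.sum_congr rfl
    intro x hx
    ring
  have htzero : ∀ i : ℤ, 0 ≤ i → g ≤ i → t i = 0 := by
    intro i h0 hgi
    rw [ht i, abs_of_nonneg h0]
    apply Finset.sum_eq_zero
    intro j hj
    simp only [Finset.mem_Icc] at hj
    rw [hsupp' (i + j) (by omega), mul_zero]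
  have hmono : ∀ i : ℤ, 0 ≤ i → ∀ j : ℤ, i ≤ j → t j ≤ t i := by
    intro i hi j hj
    refine Int.le_induction (motive := fun j _ => t j ≤ t i) le_rfl ?_ j hj
    intro n hn ih
    have h1 := hstep n (by omega)
    have h2 := (hS01 n).1
    omega
  have hnn : ∀ i : ℤ, 0 ≤ i → 0 ≤ t i := by
    intro i hi
    have h1 : t (max i g) = 0 := htzero _ (by omega) (le_max_right i g)
    have h2 := hmono i hi (max i g) (le_max_left i g)
    omega
  have habs : ∀ i : ℤ, t i = t |i| := by
    intro i
    rw [ht i, ht |i|, abs_abs]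
  have hg1 : t (g - 1) = 1 := by
    have h1 := hstep (g - 1) (by omega)
    rw [show g - 1 + 1 = g by ring] at h1
    have h2 : t g = 0 := htzero g (by omega) le_rfl
    have h3 : S (g - 1) = 1 := by
      simp only [hSdef]
      rw [show g - 1 + 1 = g by ring, Finset.Icc_self, Finset.sum_singleton, htop]
    omega
  have hpos : ∀ i : ℤ, 0 ≤ i → i < g → 1 ≤ t i := by
    intro i h0 hig
    have := hmono i h0 (g - 1) (by omega)
    omega
  refine ⟨?_, ?_, ?_⟩
  · intro i
    rw [habs i]
    exact hnn _ (abs_nonneg i)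
  · intro i hi
    have h1 := hstep i hi
    have h2 := (hS01 i).1
    omega
  · intro i hi
    constructor
    · intro h0
      by_contra hc
      push_neg at hc
      have := hpos i hi (by omega)
      omega
    · intro hgi
      exact htzero i hi hgi
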